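/- For every pair of positive integers m and d with m ≥ 2 there exists a special set system β_{m,d} = {B; C_1, ..., C_m} on m subsets whose universe B satisfies |B| ≤ (d + d·ln m + 2) · 2^d. -/

import Mathlib

open Finset Real

lemma iteProd (m a b : ℕ) (I : Finset (Fin m)) :
    (∏ i : Fin m, if i ∈ I then a else b) = a ^ I.card * b ^ (m - I.card) := by
  rw [← Finset.prod_filter_mul_prod_filter_not univ (· ∈ I)]
  have h2 : univ.filter (· ∈ I) = I := by ext i; simp
  have h3 : univ.filter (fun i => ¬ i ∈ I) = Iᶜ := by ext i; simp
  rw [h2, h3]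
  have h4 : ∏ i ∈ I, (if i ∈ I then a else b) = ∏ i ∈ I, a :=
    Finset.prod_congr rfl (fun i hi => by simp [hi])
  have h5 : ∏ i ∈ Iᶜ, (if i ∈ I then a else b) = ∏ i ∈ Iᶜ, b :=
    Finset.prod_congr rfl (fun i hi => by simp [Finset.mem_compl.mp hi])
  rw [h4, h5, Finset.prod_const, Finset.prod_const, Finset.card_compl, Fintype.card_fin]

lemma matchCard (m : ℕ) (I : Finset (Fin m)) (ε : Fin m → Bool) :
    (univ.filter fun v : Fin m → Bool => ∀ i ∈ I, v i = ε i).card = 2 ^ (m - I.card) := by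
  have hset : (univ.filter fun v : Fin m → Bool => ∀ i ∈ I, v i = ε i)
      = Fintype.piFinset (fun i => if i ∈ I then ({ε i} : Finset Bool) else Finset.univ) := by
    ext v
    simp only [mem_filter, mem_univ, true_and, Fintype.mem_piFinset]
    constructor
    · intro h i
      by_cases hi : i ∈ I
      · simp [hi, h i hi]
      · simp [hi]
    · intro h i hi
      have := h i
      simpa [hi] using this
  rw [hset, Fintype.card_piFinset]
  have h1 : ∀ i : Fin m, ((if i ∈ I then ({ε i} : Finset Bool) else univ)).card
      = if i ∈ I then 1 else 2 := by
    intro i; split <;> simp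
  rw [Finset.prod_congr rfl (fun i _ => h1 i), iteProd]
  simp

lemma avoidCard (m : ℕ) (I : Finset (Fin m)) (ε : Fin m → Bool) :
    (univ.filter fun v : Fin m → Bool => ∃ i ∈ I, ¬ v i = ε i).card = 2 ^ m - 2 ^ (m - I.card) := by
  have h := Finset.card_filter_add_card_filter_not
    (s := (univ : Finset (Fin m → Bool))) (p := fun v => ∀ i ∈ I, v i = ε i)
  have hcongr : (univ.filter fun v : Fin m → Bool => ¬ ∀ i ∈ I, v i = ε i)
      = univ.filter fun v : Fin m → Bool => ∃ i ∈ I, ¬ v i = ε i := by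
    ext v; simp only [mem_filter, mem_univ, true_and]; push_neg
    simp
  have huniv : (univ : Finset (Fin m → Bool)).card = 2 ^ m := by simp
  have hM := matchCard m I ε
  rw [hcongr, huniv, hM] at h
  exact Nat.eq_sub_of_add_eq' h

lemma epsCard (m : ℕ) (I : Finset (Fin m)) :
    (Fintype.piFinset fun i => if i ∈ I then (univ : Finset Bool) else {false}).card = 2 ^ I.card := by
  rw [Fintype.card_piFinset]
  have h1 : ∀ i : Fin m, ((if i ∈ I then (univ : Finset Bool) else {false})).card
      = if i ∈ I then 2 else 1 := by
    intro i; split <;> simp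
  rw [Finset.prod_congr rfl (fun i _ => h1 i), iteProd]
  simp

lemma exists_good (m d n : ℕ)
    (hcount : (∑ k ∈ Finset.Icc 1 d, m.choose k * (2 ^ k * (2 ^ m - 2 ^ (m - k)) ^ n)) < (2 ^ m) ^ n) :
    ∃ g : Fin n → Fin m → Bool, ∀ (I : Finset (Fin m)) (ε : Fin m → Bool),
      I.Nonempty → I.card ≤ d → ∃ x : Fin n, ∀ i ∈ I, g x i = ε i := by
  classical
  set Bad : Finset (Fin m) → (Fin m → Bool) → Finset (Fin n → Fin m → Bool) :=
    fun I ε => Fintype.piFinset (fun _ : Fin n =>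
      univ.filter fun v : Fin m → Bool => ∃ i ∈ I, ¬ v i = ε i) with hBad
  set E : Finset (Fin m) → Finset (Fin m → Bool) :=
    fun I => Fintype.piFinset fun i => if i ∈ I then (univ : Finset Bool) else {false} with hE
  set U : Finset (Fin n → Fin m → Bool) :=
    (Finset.Icc 1 d).biUnion (fun k => (Finset.powersetCard k (univ : Finset (Fin m))).biUnion
      (fun I => (E I).biUnion (fun ε => Bad I ε))) with hU
  have hBadCard : ∀ (I : Finset (Fin m)) (ε : Fin m → Bool),
      (Bad I ε).card = (2 ^ m - 2 ^ (m - I.card)) ^ n := by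
    intro I ε
    rw [hBad]
    rw [Fintype.card_piFinset]
    rw [Finset.prod_congr rfl (fun x _ => avoidCard m I ε)]
    rw [Finset.prod_const, Finset.card_univ, Fintype.card_fin]
  have hcardU : U.card < (univ : Finset (Fin n → Fin m → Bool)).card := by
    have huniv : (univ : Finset (Fin n → Fin m → Bool)).card = (2 ^ m) ^ n := by
      rw [Finset.card_univ]
      simp [Fintype.card_fun]
    rw [huniv]
    refine lt_of_le_of_lt (le_trans Finset.card_biUnion_le ?_) hcount
    refine Finset.sum_le_sum ?_
    intro k hk
    refine le_trans Finset.card_biUnion_le ?_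
    have hinner : ∀ I ∈ Finset.powersetCard k (univ : Finset (Fin m)),
        ((E I).biUnion (fun ε => Bad I ε)).card ≤ 2 ^ k * (2 ^ m - 2 ^ (m - k)) ^ n := by
      intro I hI
      have hIk : I.card = k := Finset.mem_powersetCard_univ.mp hI
      refine le_trans Finset.card_biUnion_le (le_of_eq ?_)
      rw [Finset.sum_congr rfl (fun ε _ => hBadCard I ε), Finset.sum_const, hE, epsCard, hIk,
        smul_eq_mul]
    calc ∑ I ∈ Finset.powersetCard k (univ : Finset (Fin m)), ((E I).biUnion (fun ε => Bad I ε)).card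
        ≤ ∑ _I ∈ Finset.powersetCard k (univ : Finset (Fin m)), 2 ^ k * (2 ^ m - 2 ^ (m - k)) ^ n :=
          Finset.sum_le_sum hinner
      _ = m.choose k * (2 ^ k * (2 ^ m - 2 ^ (m - k)) ^ n) := by
          rw [Finset.sum_const, Finset.card_powersetCard, Finset.card_univ, Fintype.card_fin,
            smul_eq_mul]
  have hex : ∃ g, g ∉ U := by
    by_contra hc
    push_neg at hc
    have : U = univ := Finset.eq_univ_iff_forall.mpr hc
    rw [this] at hcardU
    exact lt_irrefl _ hcardU
  obtain ⟨g, hgU⟩ := hex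
  refine ⟨g, ?_⟩
  intro I ε hne hle
  set ε' : Fin m → Bool := fun i => if i ∈ I then ε i else false with hε'
  have hε'mem : ε' ∈ E I := by
    rw [hE, Fintype.mem_piFinset]
    intro i
    by_cases hi : i ∈ I <;> simp [hε', hi]
  have hgB : g ∉ Bad I ε' := by
    intro hg
    exact hgU (Finset.mem_biUnion.mpr ⟨I.card,
      Finset.mem_Icc.mpr ⟨hne.card_pos, hle⟩,
      Finset.mem_biUnion.mpr ⟨I, Finset.mem_powersetCard_univ.mpr rfl,
        Finset.mem_biUnion.mpr ⟨ε', hε'mem, hg⟩⟩⟩)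
  rw [hBad] at hgB
  simp only [Fintype.mem_piFinset, Finset.mem_filter, Finset.mem_univ, true_and] at hgB
  push_neg at hgB
  obtain ⟨x, hx⟩ := hgB
  refine ⟨x, fun i hi => ?_⟩
  have := hx i hi
  simpa [hε', hi] using this

lemma count_lt (m d n : ℕ) (hm : 2 ≤ m) (hd : 1 ≤ d)
    (hn : ((d:ℝ) + d * Real.log m + 2) * 2 ^ d - 1 ≤ (n:ℝ)) :
    (∑ k ∈ Finset.Icc 1 d, m.choose k * (2 ^ k * (2 ^ m - 2 ^ (m - k)) ^ n)) < (2 ^ m) ^ n := by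
  have hm0 : (0:ℝ) < m := by exact_mod_cast Nat.lt_of_lt_of_le (by norm_num) hm
  have he2 : (2:ℝ) ≤ Real.exp 1 := le_of_lt (lt_trans (by norm_num) Real.exp_one_gt_d9)
  set E : ℝ := Real.exp (-((n:ℝ) * (1/2) ^ d)) with hE
  have hEpos : 0 < E := Real.exp_pos _
  rw [← Nat.cast_lt (α := ℝ)]
  push_cast
  -- per-term bound
  have hterm : ∀ k ∈ Finset.Icc 1 d,
      (↑(m.choose k) * (2 ^ k * ((2 ^ m - 2 ^ (m - k) : ℕ) : ℝ) ^ n))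
        ≤ ((2:ℝ) ^ m) ^ n * E * ((2 * m) ^ d / 2 ^ d) * 2 ^ k := by
    intro k hk
    obtain ⟨hk1, hkd⟩ := Finset.mem_Icc.mp hk
    have hhalf : (0:ℝ) ≤ 1 - (1/2) ^ k := by
      have : ((1:ℝ)/2) ^ k ≤ 1 := pow_le_one₀ (by norm_num) (by norm_num)
      linarith
    -- cast bound
    have hcast : (((2 ^ m - 2 ^ (m - k) : ℕ) : ℝ)) ≤ 2 ^ m * (1 - (1/2) ^ k) := by
      have hle : (2:ℕ) ^ (m - k) ≤ 2 ^ m := Nat.pow_le_pow_right (by norm_num) (Nat.sub_le _ _)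
      rw [Nat.cast_sub hle]
      push_cast
      have h1 : (2:ℝ) ^ m * (1/2) ^ k ≤ 2 ^ (m - k) := by
        have h2 : (2:ℝ) ^ m ≤ 2 ^ (m - k) * 2 ^ k := by
          rw [← pow_add]
          exact pow_le_pow_right₀ (by norm_num) (by omega)
        have h3 : (0:ℝ) < 2 ^ k := by positivity
        rw [div_pow, one_pow, mul_one_div, div_le_iff₀ h3]
        linarith
      linarith
    have hXnn : (0:ℝ) ≤ ((2 ^ m - 2 ^ (m - k) : ℕ) : ℝ) := Nat.cast_nonneg _
    have hpow : (((2 ^ m - 2 ^ (m - k) : ℕ) : ℝ)) ^ n ≤ ((2:ℝ) ^ m) ^ n * E := by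
      calc (((2 ^ m - 2 ^ (m - k) : ℕ) : ℝ)) ^ n ≤ ((2:ℝ) ^ m * (1 - (1/2) ^ k)) ^ n :=
            pow_le_pow_left₀ hXnn hcast n
        _ = ((2:ℝ) ^ m) ^ n * (1 - (1/2) ^ k) ^ n := mul_pow _ _ _
        _ ≤ ((2:ℝ) ^ m) ^ n * E := by
            refine mul_le_mul_of_nonneg_left ?_ (by positivity)
            have hb : (1 - (1/2:ℝ) ^ k) ≤ Real.exp (-((1/2) ^ k)) := by
              have := Real.add_one_le_exp (-((1/2:ℝ) ^ k))
              linarith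
            calc (1 - (1/2:ℝ) ^ k) ^ n ≤ (Real.exp (-((1/2) ^ k))) ^ n :=
                  pow_le_pow_left₀ hhalf hb n
              _ = Real.exp (-((n:ℝ) * (1/2) ^ k)) := by
                  rw [← Real.exp_nat_mul]; ring_nf
              _ ≤ E := by
                  rw [hE]
                  apply Real.exp_le_exp.mpr
                  have : ((1:ℝ)/2) ^ d ≤ (1/2) ^ k :=
                    pow_le_pow_of_le_one (by norm_num) (by norm_num) hkd
                  have hn0 : (0:ℝ) ≤ n := Nat.cast_nonneg _
                  nlinarith
    have hchoose : (↑(m.choose k) : ℝ) ≤ (m:ℝ) ^ k := by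
      exact_mod_cast Nat.cast_le.mpr (Nat.choose_le_pow m k)
    have hcomb : ((m:ℝ)) ^ k * 2 ^ k ≤ (2 * m) ^ d / 2 ^ d * 2 ^ k * 1 := by
      rw [mul_one]
      have h2d : (0:ℝ) < (2:ℝ) ^ d := by positivity
      rw [div_mul_eq_mul_div, le_div_iff₀ h2d]
      have h5 : (2:ℝ) ^ d = 2 ^ k * 2 ^ (d - k) := by rw [← pow_add]; congr 1; omega
      have h6 : ((2:ℝ) * m) ^ d = (2 * m) ^ k * (2 * m) ^ (d - k) := by
        rw [← pow_add]; congr 1; omega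
      have hm1 : (1:ℝ) ≤ (m:ℝ) := by exact_mod_cast Nat.one_le_of_lt hm
      have h7 : (2:ℝ) ^ (d - k) ≤ (2 * m) ^ (d - k) := by
        apply pow_le_pow_left₀ (by norm_num)
        linarith
      have h8 : ((m:ℝ)) ^ k * 2 ^ k = (2 * m) ^ k := by rw [mul_pow]; ring
      have h9 : (2 * (m:ℝ)) ^ k * 2 ^ (d - k) ≤ (2 * m) ^ k * (2 * m) ^ (d - k) :=
        mul_le_mul_of_nonneg_left h7 (by positivity)
      calc (m:ℝ) ^ k * 2 ^ k * 2 ^ d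
          = (2 * m) ^ k * 2 ^ (d - k) * 2 ^ k := by rw [h5, ← h8]; ring
        _ ≤ (2 * m) ^ k * (2 * m) ^ (d - k) * 2 ^ k :=
            mul_le_mul_of_nonneg_right h9 (by positivity)
        _ = (2 * m) ^ d * 2 ^ k := by rw [← h6]
    calc (↑(m.choose k) : ℝ) * (2 ^ k * ((2 ^ m - 2 ^ (m - k) : ℕ) : ℝ) ^ n)
        ≤ (m:ℝ) ^ k * (2 ^ k * (((2:ℝ) ^ m) ^ n * E)) := by
          apply mul_le_mul hchoose ?_ (by positivity) (by positivity)
          exact mul_le_mul_of_nonneg_left hpow (by positivity)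
      _ = ((2:ℝ) ^ m) ^ n * E * ((m:ℝ) ^ k * 2 ^ k) := by ring
      _ ≤ ((2:ℝ) ^ m) ^ n * E * ((2 * m) ^ d / 2 ^ d * 2 ^ k * 1) := by
          apply mul_le_mul_of_nonneg_left hcomb (by positivity)
      _ = ((2:ℝ) ^ m) ^ n * E * ((2 * m) ^ d / 2 ^ d) * 2 ^ k := by ring
  refine lt_of_le_of_lt (Finset.sum_le_sum hterm) ?_
  rw [← Finset.mul_sum]
  -- geometric sum bound
  have hgeom : ∑ k ∈ Finset.Icc 1 d, (2:ℝ) ^ k ≤ 2 ^ (d + 1) := by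
    have hsub : Finset.Icc 1 d ⊆ Finset.range (d + 1) := by
      intro k hk; simp only [Finset.mem_Icc] at hk; simp only [Finset.mem_range]; omega
    calc ∑ k ∈ Finset.Icc 1 d, (2:ℝ) ^ k ≤ ∑ k ∈ Finset.range (d + 1), (2:ℝ) ^ k :=
          Finset.sum_le_sum_of_subset_of_nonneg hsub (fun _ _ _ => by positivity)
      _ = (2 ^ (d + 1) - 1) / (2 - 1) := geom_sum_eq (by norm_num) (d + 1)
      _ ≤ 2 ^ (d + 1) := by norm_num
  have hmain : ((2:ℝ) ^ m) ^ n * E * ((2 * m) ^ d / 2 ^ d) * 2 ^ (d + 1) < ((2:ℝ) ^ m) ^ n := by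
    have hA : (0:ℝ) < ((2:ℝ) ^ m) ^ n := by positivity
    have hm1 : (1:ℝ) ≤ (m:ℝ) := by exact_mod_cast Nat.one_le_of_lt hm
    have hR : Real.exp 1 ^ d * (m:ℝ) ^ d * Real.exp (3/2)
        = Real.exp ((d:ℝ) + (d:ℝ) * Real.log m + 3/2) := by
      rw [Real.exp_add, Real.exp_add, ← Real.exp_nat_mul, mul_one,
        show ((m:ℝ)) ^ d = Real.exp ((d:ℝ) * Real.log m) from by
          rw [Real.exp_nat_mul, Real.exp_log hm0]]
    have hEbound : E ≤ (Real.exp 1 ^ d * (m:ℝ) ^ d * Real.exp (3/2))⁻¹ := by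
      rw [hE, hR, ← Real.exp_neg, Real.exp_le_exp, neg_le_neg_iff]
      have hP : ((1:ℝ)/2) ^ d = ((2:ℝ) ^ d)⁻¹ := by
        rw [div_pow, one_pow, one_div]
      rw [hP, ← div_eq_mul_inv, le_div_iff₀ (by positivity : (0:ℝ) < 2 ^ d)]
      have h2d2 : (2:ℝ) ≤ 2 ^ d := by
        calc (2:ℝ) = 2 ^ 1 := (pow_one 2).symm
          _ ≤ 2 ^ d := pow_le_pow_right₀ one_le_two hd
      have hlog : (0:ℝ) ≤ Real.log m := Real.log_nonneg hm1
      have hd0 : (0:ℝ) ≤ (d:ℝ) := Nat.cast_nonneg d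
      nlinarith [hn, mul_nonneg hd0 hlog]
    have hsmall : E * ((2 * (m:ℝ)) ^ d * 2) < 1 := by
      have hprod : (0:ℝ) < Real.exp 1 ^ d * (m:ℝ) ^ d * Real.exp (3/2) := by positivity
      have hXlt : (2 * (m:ℝ)) ^ d * 2 < Real.exp 1 ^ d * (m:ℝ) ^ d * Real.exp (3/2) := by
        have hpm : (0:ℝ) < (m:ℝ) ^ d := by positivity
        have h2e : (2:ℝ) ^ d ≤ Real.exp 1 ^ d := pow_le_pow_left₀ (by norm_num) he2 d
        have hexp32 : (5/2:ℝ) ≤ Real.exp (3/2) := by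
          have := Real.add_one_le_exp (3/2:ℝ)
          linarith
        have hee : (0:ℝ) < Real.exp 1 ^ d := by positivity
        calc (2 * (m:ℝ)) ^ d * 2 = 2 ^ d * (m:ℝ) ^ d * 2 := by rw [mul_pow]
          _ ≤ Real.exp 1 ^ d * (m:ℝ) ^ d * 2 := by nlinarith
          _ < Real.exp 1 ^ d * (m:ℝ) ^ d * Real.exp (3/2) := by nlinarith
      calc E * ((2 * (m:ℝ)) ^ d * 2)
          ≤ (Real.exp 1 ^ d * (m:ℝ) ^ d * Real.exp (3/2))⁻¹ * ((2 * (m:ℝ)) ^ d * 2) := by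
            apply mul_le_mul_of_nonneg_right hEbound (by positivity)
        _ < 1 := by
            rw [inv_mul_eq_div, div_lt_one hprod]
            exact hXlt
    have hrw : ((2:ℝ) ^ m) ^ n * E * ((2 * ↑m) ^ d / 2 ^ d) * 2 ^ (d + 1)
        = ((2:ℝ) ^ m) ^ n * (E * ((2 * ↑m) ^ d * 2)) := by
      rw [pow_succ]
      field_simp
    rw [hrw]
    calc ((2:ℝ) ^ m) ^ n * (E * ((2 * ↑m) ^ d * 2)) < ((2:ℝ) ^ m) ^ n * 1 :=
          mul_lt_mul_of_pos_left hsmall hA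
      _ = ((2:ℝ) ^ m) ^ n := mul_one _
  calc ((2:ℝ) ^ m) ^ n * E * ((2 * m) ^ d / 2 ^ d) * ∑ k ∈ Finset.Icc 1 d, (2:ℝ) ^ k
      ≤ ((2:ℝ) ^ m) ^ n * E * ((2 * m) ^ d / 2 ^ d) * 2 ^ (d + 1) := by
        apply mul_le_mul_of_nonneg_left hgeom (by positivity)
    _ < ((2:ℝ) ^ m) ^ n := hmain


/-- For every pair of positive integers `m` and `d` with `m ≥ 2` there
exists a special set system `β_{m,d} = {B; C_1, ..., C_m}` on `m` subsets whose
universe `B` satisfies `|B| ≤ (d + d·ln m + 2) · 2^d`. -/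
theorem special_set_system_exists_randomized_size :
    ∀ m d : ℕ, 2 ≤ m → 0 < d →
      ∃ (B : Finset ℕ) (C : Fin m → Finset ℕ),
        (∀ i, C i ⊆ B) ∧
        (∀ (I : Finset (Fin m)) (D : Fin m → Finset ℕ),
          I.card ≤ d → (∀ i ∈ I, D i = C i ∨ D i = B \ C i) →
          I.biUnion D ≠ B) ∧
        (B.card : ℝ) ≤ ((d : ℝ) + (d : ℝ) * Real.log m + 2) * 2 ^ d := by
  intro m d hm hd
  have hd1 : 1 ≤ d := hd
  have hm1 : (1:ℝ) ≤ (m:ℝ) := by exact_mod_cast Nat.one_le_of_lt hm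
  have hlog : (0:ℝ) ≤ Real.log m := Real.log_nonneg hm1
  have hd0 : (0:ℝ) ≤ (d:ℝ) := Nat.cast_nonneg d
  have hdd1 : (1:ℝ) ≤ (d:ℝ) := by exact_mod_cast hd1
  set N : ℝ := ((d:ℝ) + (d:ℝ) * Real.log m + 2) * 2 ^ d with hNdef
  have h2dpos : (0:ℝ) < 2 ^ d := by positivity
  have h2d1 : (1:ℝ) ≤ 2 ^ d := by
    have : (1:ℕ) ≤ 2 ^ d := Nat.one_le_two_pow
    exact_mod_cast this
  have hNnonneg : (0:ℝ) ≤ N := by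
    rw [hNdef]
    have : (0:ℝ) ≤ (d:ℝ) + (d:ℝ) * Real.log m + 2 := by nlinarith
    positivity
  set n : ℕ := ⌊N⌋₊ with hndef
  have hn_low : N - 1 ≤ (n:ℝ) := by
    have := Nat.lt_floor_add_one N
    rw [hndef]
    linarith
  have hn_up : (n:ℝ) ≤ N := Nat.floor_le hNnonneg
  have hn_pos : 0 < n := by
    have hN3 : (3:ℝ) ≤ N := by
      rw [hNdef]
      have hA : (3:ℝ) ≤ (d:ℝ) + (d:ℝ) * Real.log m + 2 := by
        nlinarith [mul_nonneg hd0 hlog]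
      calc (3:ℝ) = 3 * 1 := by ring
        _ ≤ ((d:ℝ) + (d:ℝ) * Real.log m + 2) * 2 ^ d :=
            mul_le_mul hA h2d1 (by norm_num) (by linarith)
    have : (0:ℝ) < (n:ℝ) := by linarith
    exact_mod_cast this
  have hcount := count_lt m d n hm hd1 (by rw [← hNdef]; exact hn_low)
  obtain ⟨g, hg⟩ := exists_good m d n hcount
  set C : Fin m → Finset ℕ :=
    fun i => (Finset.univ.filter (fun x : Fin n => g x i = true)).image Fin.val with hC
  refine ⟨Finset.range n, C, ?_, ?_, ?_⟩
  · intro i y hy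
    rw [hC] at hy
    simp only [Finset.mem_image, Finset.mem_filter, Finset.mem_univ, true_and] at hy
    obtain ⟨x, _, rfl⟩ := hy
    exact Finset.mem_range.mpr x.isLt
  · intro I D hIcard hD heq
    by_cases hne : I.Nonempty
    · set ε : Fin m → Bool := fun i => if D i = C i then false else true with hεdef
      obtain ⟨x, hx⟩ := hg I ε hne hIcard
      have hxB : (x:ℕ) ∈ Finset.range n := Finset.mem_range.mpr x.isLt
      rw [← heq] at hxB
      obtain ⟨i, hiI, hxD⟩ := Finset.mem_biUnion.mp hxB
      have hxi := hx i hiI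
      by_cases hDC : D i = C i
      · have hf : g x i = false := by
          rw [hxi, hεdef]
          simp [hDC]
        rw [hDC, hC] at hxD
        simp only [Finset.mem_image, Finset.mem_filter, Finset.mem_univ, true_and] at hxD
        obtain ⟨x', hgx', hval⟩ := hxD
        have hxx : x' = x := Fin.ext hval
        rw [hxx, hf] at hgx'
        exact Bool.noConfusion hgx'
      · have ht : g x i = true := by
          rw [hxi, hεdef]
          simp [hDC]
        have hDi : D i = Finset.range n \ C i := by
          rcases hD i hiI with h | h
          · exact absurd h hDC
          · exact h
        rw [hDi] at hxD
        have hxCi : (x:ℕ) ∈ C i := by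
          rw [hC]
          simp only [Finset.mem_image, Finset.mem_filter, Finset.mem_univ, true_and]
          exact ⟨x, ht, rfl⟩
        exact (Finset.mem_sdiff.mp hxD).2 hxCi
    · rw [Finset.not_nonempty_iff_eq_empty] at hne
      have h0 : (0:ℕ) ∈ Finset.range n := Finset.mem_range.mpr hn_pos
      rw [← heq, hne] at h0
      simp at h0
  · rw [Finset.card_range]
    exact hn_up
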